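/- In a simple 3-regular graph G on n vertices, the number of edges lying on triangles is at most (5s + t)/4 · n, where s·n is the number of vertices on triangles and t·n is the number of vertices on tetrahedra (K_4 components). -/

import Mathlib

set_option maxHeartbeats 1000000

open Finset

variable {n : ℕ}

/-- The "triangle edge" graph: edges of `G` lying on a triangle. -/
def triG (G : SimpleGraph (Fin n)) : SimpleGraph (Fin n) where
  Adj u v := G.Adj u v ∧ ∃ r, G.Adj u r ∧ G.Adj v r
  symm := ⟨by rintro u v ⟨h, r, h1, h2⟩; exact ⟨h.symm, r, h2, h1⟩⟩
  loopless := ⟨by rintro u ⟨h, _⟩; exact G.loopless.irrefl u h⟩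

lemma triG_adj {G : SimpleGraph (Fin n)} {u v : Fin n} :
    (triG G).Adj u v ↔ G.Adj u v ∧ ∃ r, G.Adj u r ∧ G.Adj v r := Iff.rfl

instance (G : SimpleGraph (Fin n)) [DecidableRel G.Adj] : DecidableRel (triG G).Adj :=
  fun _ _ => inferInstanceAs (Decidable (_ ∧ _))

lemma card3' {x y z : Fin n} (h1 : x ≠ y) (h2 : x ≠ z) (h3 : y ≠ z) :
    ({x, y, z} : Finset (Fin n)).card = 3 := by
  rw [card_insert_of_notMem (by simp [h1, h2]),
    card_insert_of_notMem (by simp [h3]), card_singleton]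

lemma card4' {x y z w : Fin n} (h1 : x ≠ y) (h2 : x ≠ z) (h3 : x ≠ w)
    (h4 : y ≠ z) (h5 : y ≠ w) (h6 : z ≠ w) :
    ({x, y, z, w} : Finset (Fin n)).card = 4 := by
  rw [card_insert_of_notMem (by simp [h1, h2, h3]),
    card_insert_of_notMem (by simp [h4, h5]),
    card_insert_of_notMem (by simp [h6]), card_singleton]

section
variable (G : SimpleGraph (Fin n)) [DecidableRel G.Adj]

lemma nbr_card (hreg : ∀ u, (G.neighborSet u).ncard = 3) (v : Fin n) :
    (G.neighborFinset v).card = 3 := by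
  have h := hreg v
  rwa [Set.ncard_eq_toFinset_card'] at h

lemma tri_sub (v : Fin n) : (triG G).neighborFinset v ⊆ G.neighborFinset v := by
  intro u hu
  rw [SimpleGraph.mem_neighborFinset] at *
  exact hu.1

lemma tri_deg_le (hreg : ∀ u, (G.neighborSet u).ncard = 3) (v : Fin n) :
    (triG G).degree v ≤ 3 := by
  rw [← nbr_card G hreg v]
  exact card_le_card (tri_sub G v)

lemma mem_S_of_adj {v u : Fin n} (h : (triG G).Adj v u) :
    ∃ t ∈ G.cliqueSet 3, v ∈ t := by
  obtain ⟨hvu, r, hvr, hur⟩ := h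
  refine ⟨{v, u, r}, ?_, by simp⟩
  rw [SimpleGraph.mem_cliqueSet_iff, SimpleGraph.is3Clique_iff]
  exact ⟨v, u, r, hvu, hvr, hur, rfl⟩

lemma mem_S_of_deg_pos {v : Fin n} (h : 0 < (triG G).degree v) :
    ∃ t ∈ G.cliqueSet 3, v ∈ t := by
  obtain ⟨u, hu⟩ := Finset.card_pos.mp h
  exact mem_S_of_adj G ((SimpleGraph.mem_neighborFinset _ _ _).mp hu)

lemma two_le_deg {v x y : Fin n} (hxy : x ≠ y)
    (h1 : (triG G).Adj v x) (h2 : (triG G).Adj v y) : 2 ≤ (triG G).degree v := by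
  have hsub : ({x, y} : Finset (Fin n)) ⊆ (triG G).neighborFinset v := by
    intro u hu
    rw [SimpleGraph.mem_neighborFinset]
    rcases Finset.mem_insert.mp hu with rfl | hu
    · exact h1
    · rw [Finset.mem_singleton] at hu; subst hu; exact h2
  calc 2 = ({x, y} : Finset (Fin n)).card := (Finset.card_pair hxy).symm
    _ ≤ _ := card_le_card hsub

lemma deg_ge_two_of_S {v : Fin n} (h : ∃ t ∈ G.cliqueSet 3, v ∈ t) :
    2 ≤ (triG G).degree v := by
  obtain ⟨t, ht, hvt⟩ := h
  rw [SimpleGraph.mem_cliqueSet_iff, SimpleGraph.is3Clique_iff] at ht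
  obtain ⟨x, y, z, hxy, hxz, hyz, rfl⟩ := ht
  simp only [Finset.mem_insert, Finset.mem_singleton] at hvt
  rcases hvt with rfl | rfl | rfl
  · exact two_le_deg G hyz.ne ⟨hxy, z, hxz, hyz⟩ ⟨hxz, y, hxy, hyz.symm⟩
  · exact two_le_deg G hxz.ne ⟨hxy.symm, z, hyz, hxz⟩ ⟨hyz, x, hxy.symm, hxz.symm⟩
  · exact two_le_deg G hxy.ne ⟨hxz.symm, y, hyz.symm, hxy⟩ ⟨hyz.symm, x, hxz.symm, hxy.symm⟩

/-- The tip of a diamond has triangle-degree 2. -/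
lemma tip_deg (hreg : ∀ u, (G.neighborSet u).ncard = 3) {v a b c : Fin n}
    (hNv : G.neighborFinset v = {a, b, c})
    (hab0 : a ≠ b) (hac0 : a ≠ c) (hbc0 : b ≠ c)
    (hva : G.Adj v a) (hvb : G.Adj v b) (hvc : G.Adj v c)
    (hab : G.Adj a b) (hac : G.Adj a c) (hbc : ¬ G.Adj b c) :
    (triG G).degree b = 2 := by
  have hNa : G.neighborFinset a = {v, b, c} := by
    refine (Finset.eq_of_subset_of_card_le ?_ ?_).symm
    · intro u hu
      rw [SimpleGraph.mem_neighborFinset]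
      simp only [Finset.mem_insert, Finset.mem_singleton] at hu
      rcases hu with rfl | rfl | rfl
      · exact hva.symm
      · exact hab
      · exact hac
    · rw [nbr_card G hreg a, card3' hvb.ne hvc.ne hbc0]
  have hkey : (triG G).neighborFinset b = {v, a} := by
    ext u
    rw [SimpleGraph.mem_neighborFinset, triG_adj]
    constructor
    · rintro ⟨hbu, r, hbr, hur⟩
      by_contra hcon
      simp only [Finset.mem_insert, Finset.mem_singleton, not_or] at hcon
      obtain ⟨huv, hua⟩ := hcon
      by_cases hrv : r = v
      · have : u ∈ G.neighborFinset v := by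
          rw [SimpleGraph.mem_neighborFinset]
          exact (hrv ▸ hur).symm
        rw [hNv] at this
        simp only [Finset.mem_insert, Finset.mem_singleton] at this
        rcases this with h | h | h
        · exact hua h
        · exact G.loopless.irrefl b (h ▸ hbu)
        · exact hbc (h ▸ hbu)
      · by_cases hra : r = a
        · have : u ∈ G.neighborFinset a := by
            rw [SimpleGraph.mem_neighborFinset]
            exact (hra ▸ hur).symm
          rw [hNa] at this
          simp only [Finset.mem_insert, Finset.mem_singleton] at this
          rcases this with h | h | h
          · exact huv h
          · exact G.loopless.irrefl b (h ▸ hbu)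
          · exact hbc (h ▸ hbu)
        · have hsub : ({v, a, u, r} : Finset (Fin n)) ⊆ G.neighborFinset b := by
            intro w hw
            rw [SimpleGraph.mem_neighborFinset]
            simp only [Finset.mem_insert, Finset.mem_singleton] at hw
            rcases hw with rfl | rfl | rfl | rfl
            · exact hvb.symm
            · exact hab.symm
            · exact hbu
            · exact hbr
          have h4 : ({v, a, u, r} : Finset (Fin n)).card = 4 :=
            card4' hva.ne (fun h => huv h.symm) (fun h => hrv h.symm)
              (fun h => hua h.symm) (fun h => hra h.symm) hur.ne
          have := card_le_card hsub
          rw [h4, nbr_card G hreg b] at this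
          omega
    · intro hu
      simp only [Finset.mem_insert, Finset.mem_singleton] at hu
      rcases hu with rfl | rfl
      · exact ⟨hvb.symm, a, hab.symm, hva⟩
      · exact ⟨hab.symm, v, hvb.symm, hva.symm⟩
  rw [SimpleGraph.degree, hkey, Finset.card_pair hva.ne]

lemma key (hreg : ∀ u, (G.neighborSet u).ncard = 3) (v : Fin n)
    (h3 : (triG G).degree v = 3) (hK : ¬ ∃ t ∈ G.cliqueSet 4, v ∈ t) :
    ∃ x y, x ≠ y ∧ (triG G).Adj v x ∧ (triG G).Adj v y ∧
      (triG G).degree x = 2 ∧ (triG G).degree y = 2 := by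
  have hNeq : (triG G).neighborFinset v = G.neighborFinset v :=
    Finset.eq_of_subset_of_card_le (tri_sub G v)
      (by rw [nbr_card G hreg v]; exact h3.ge)
  obtain ⟨a, b, c, hab0, hac0, hbc0, habc⟩ := Finset.card_eq_three.mp (nbr_card G hreg v)
  have hmem : ∀ x, x ∈ ({a, b, c} : Finset (Fin n)) → (triG G).Adj v x := by
    intro x hx
    rw [← habc, ← hNeq] at hx
    exact (SimpleGraph.mem_neighborFinset _ _ _).mp hx
  have hta := hmem a (by simp)
  have htb := hmem b (by simp)
  have htc := hmem c (by simp)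
  obtain ⟨hva, -⟩ := triG_adj.mp hta
  obtain ⟨hvb, -⟩ := triG_adj.mp htb
  obtain ⟨hvc, -⟩ := triG_adj.mp htc
  have cover : ∀ x : Fin n, (triG G).Adj v x → ∃ r, r ∈ ({a, b, c} : Finset (Fin n)) ∧ G.Adj x r := by
    rintro x ⟨hvx, r, hvr, hxr⟩
    refine ⟨r, ?_, hxr⟩
    rw [← habc]
    exact (SimpleGraph.mem_neighborFinset _ _ _).mpr hvr
  have ca : G.Adj a b ∨ G.Adj a c := by
    obtain ⟨r, hr, har⟩ := cover a hta
    simp only [Finset.mem_insert, Finset.mem_singleton] at hr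
    rcases hr with h | h | h
    · exact absurd (h ▸ har) (G.loopless.irrefl a)
    · exact Or.inl (h ▸ har)
    · exact Or.inr (h ▸ har)
  have cb : G.Adj b a ∨ G.Adj b c := by
    obtain ⟨r, hr, hbr⟩ := cover b htb
    simp only [Finset.mem_insert, Finset.mem_singleton] at hr
    rcases hr with h | h | h
    · exact Or.inl (h ▸ hbr)
    · exact absurd (h ▸ hbr) (G.loopless.irrefl b)
    · exact Or.inr (h ▸ hbr)
  have cc : G.Adj c a ∨ G.Adj c b := by
    obtain ⟨r, hr, hcr⟩ := cover c htc
    simp only [Finset.mem_insert, Finset.mem_singleton] at hr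
    rcases hr with h | h | h
    · exact Or.inl (h ▸ hcr)
    · exact Or.inr (h ▸ hcr)
    · exact absurd (h ▸ hcr) (G.loopless.irrefl c)
  by_cases hbc : G.Adj b c
  · by_cases hac : G.Adj a c
    · by_cases hab : G.Adj a b
      · exfalso
        apply hK
        refine ⟨{v, a, b, c}, ?_, by simp⟩
        rw [SimpleGraph.mem_cliqueSet_iff]
        constructor
        · intro x hx y hy hne
          simp only [Finset.coe_insert, Set.mem_insert_iff, Finset.coe_singleton,
            Set.mem_singleton_iff] at hx hy
          rcases hx with rfl | rfl | rfl | rfl <;> rcases hy with rfl | rfl | rfl | rfl <;>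
            first
              | exact absurd rfl hne
              | assumption
              | exact hva.symm
              | exact hvb.symm
              | exact hvc.symm
              | exact hab.symm
              | exact hac.symm
              | exact hbc.symm
        · exact card4' hva.ne hvb.ne hvc.ne hab0 hac0 hbc0
      · -- hub c, tips a b
        have hac' := ca.resolve_left hab
        have hbc' := cb.resolve_left (fun h => hab h.symm)
        have e1 : ({a, b, c} : Finset (Fin n)) = {c, a, b} := by
          ext x
          simp only [Finset.mem_insert, Finset.mem_singleton]
          tauto
        have e2 : ({a, b, c} : Finset (Fin n)) = {c, b, a} := by
          ext x
          simp only [Finset.mem_insert, Finset.mem_singleton]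
          tauto
        refine ⟨a, b, hab0, hta, htb, ?_, ?_⟩
        · exact tip_deg G hreg (habc.trans e1) hac0.symm hbc0.symm hab0
            hvc hva hvb hac'.symm hbc'.symm hab
        · exact tip_deg G hreg (habc.trans e2) hbc0.symm hac0.symm hab0.symm
            hvc hvb hva hbc'.symm hac'.symm (fun h => hab h.symm)
    · -- hub b, tips a c
      have hab' := ca.resolve_right hac
      have e1 : ({a, b, c} : Finset (Fin n)) = {b, a, c} := by
        ext x
        simp only [Finset.mem_insert, Finset.mem_singleton]
        tauto
      have e2 : ({a, b, c} : Finset (Fin n)) = {b, c, a} := by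
        ext x
        simp only [Finset.mem_insert, Finset.mem_singleton]
        tauto
      refine ⟨a, c, hac0, hta, htc, ?_, ?_⟩
      · exact tip_deg G hreg (habc.trans e1) hab0.symm hbc0 hac0
          hvb hva hvc hab'.symm hbc hac
      · exact tip_deg G hreg (habc.trans e2) hbc0 hab0.symm hac0.symm
          hvb hvc hva hbc hab'.symm (fun h => hac h.symm)
  · -- hub a, tips b c
    have hba' := cb.resolve_right hbc
    have hca' := cc.resolve_right (fun h => hbc h.symm)
    have e2 : ({a, b, c} : Finset (Fin n)) = {a, c, b} := by
      ext x
      simp only [Finset.mem_insert, Finset.mem_singleton]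
      tauto
    refine ⟨b, c, hbc0, htb, htc, ?_, ?_⟩
    · exact tip_deg G hreg habc hab0 hac0 hbc0 hva hvb hvc hba'.symm hca'.symm hbc
    · exact tip_deg G hreg (habc.trans e2) hac0 hab0 hbc0.symm
        hva hvc hvb hca'.symm hba'.symm (fun h => hbc h.symm)

end

theorem stmt19 (n : ℕ) (G : SimpleGraph (Fin n))
    (hreg : ∀ u, (G.neighborSet u).ncard = 3) :
    4 * {e : Sym2 (Fin n) | e ∈ G.edgeSet ∧
          ∃ p q r, e = s(p, q) ∧ G.Adj p r ∧ G.Adj q r}.ncard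
      ≤ 5 * {u : Fin n | ∃ t ∈ G.cliqueSet 3, u ∈ t}.ncard
        + {u : Fin n | ∃ t ∈ G.cliqueSet 4, u ∈ t}.ncard := by
  classical
  -- edge set identification
  have hT : {e : Sym2 (Fin n) | e ∈ G.edgeSet ∧
      ∃ p q r, e = s(p, q) ∧ G.Adj p r ∧ G.Adj q r} = (triG G).edgeSet := by
    ext e
    induction e using Sym2.ind with
    | _ u v =>
      simp only [Set.mem_setOf_eq, SimpleGraph.mem_edgeSet]
      constructor
      · rintro ⟨huv, p, q, r, he, hpr, hqr⟩
        refine triG_adj.mpr ⟨huv, ?_⟩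
        rw [Sym2.eq_iff] at he
        rcases he with ⟨rfl, rfl⟩ | ⟨rfl, rfl⟩
        · exact ⟨r, hpr, hqr⟩
        · exact ⟨r, hqr, hpr⟩
      · intro h
        obtain ⟨huv, r, h1, h2⟩ := triG_adj.mp h
        exact ⟨huv, u, v, r, rfl, h1, h2⟩
  have hTcard : {e : Sym2 (Fin n) | e ∈ G.edgeSet ∧
      ∃ p q r, e = s(p, q) ∧ G.Adj p r ∧ G.Adj q r}.ncard = (triG G).edgeFinset.card := by
    rw [hT, ← SimpleGraph.coe_edgeFinset, Set.ncard_coe_finset]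
  set Sf : Finset (Fin n) := Finset.univ.filter (fun u => ∃ t ∈ G.cliqueSet 3, u ∈ t) with hSf
  set Kf : Finset (Fin n) := Finset.univ.filter (fun u => ∃ t ∈ G.cliqueSet 4, u ∈ t) with hKf
  have hScard : {u : Fin n | ∃ t ∈ G.cliqueSet 3, u ∈ t}.ncard = Sf.card := by
    rw [← Set.ncard_coe_finset]
    congr 1
    ext u
    simp [hSf]
  have hKcard : {u : Fin n | ∃ t ∈ G.cliqueSet 4, u ∈ t}.ncard = Kf.card := by
    rw [← Set.ncard_coe_finset]
    congr 1
    ext u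
    simp [hKf]
  rw [hTcard, hScard, hKcard]
  set A : Finset (Fin n) :=
    Finset.univ.filter (fun v => (triG G).degree v = 3 ∧ ∃ t ∈ G.cliqueSet 4, v ∈ t) with hA
  set B : Finset (Fin n) :=
    Finset.univ.filter (fun v => (triG G).degree v = 3 ∧ ¬ ∃ t ∈ G.cliqueSet 4, v ∈ t) with hB
  set C : Finset (Fin n) :=
    Finset.univ.filter (fun v => (triG G).degree v = 2) with hC
  have hdisjAB : Disjoint A B := by
    rw [Finset.disjoint_left]
    intro v hv hv'
    rw [hA, Finset.mem_filter] at hv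
    rw [hB, Finset.mem_filter] at hv'
    exact hv'.2.2 hv.2.2
  have hdisjABC : Disjoint (A ∪ B) C := by
    rw [Finset.disjoint_left]
    intro v hv hv'
    rw [hC, Finset.mem_filter] at hv'
    rcases Finset.mem_union.mp hv with h | h
    · rw [hA, Finset.mem_filter] at h
      omega
    · rw [hB, Finset.mem_filter] at h
      omega
  have hsum : ∑ v, (triG G).degree v = 2 * (triG G).edgeFinset.card :=
    SimpleGraph.sum_degrees_eq_twice_card_edges _
  have hdecomp : ∑ v, (triG G).degree v = 3 * A.card + 3 * B.card + 2 * C.card := by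
    have hz : ∀ v ∈ Finset.univ, v ∉ A ∪ B ∪ C → (triG G).degree v = 0 := by
      intro v _ hv
      simp only [Finset.mem_union, hA, hB, hC, Finset.mem_filter, Finset.mem_univ,
        true_and, not_or] at hv
      obtain ⟨⟨h1, h2⟩, h3⟩ := hv
      have hle := tri_deg_le G hreg v
      have h33 : (triG G).degree v ≠ 3 := by
        by_cases hk : ∃ t ∈ G.cliqueSet 4, v ∈ t
        · intro h; exact h1 ⟨h, hk⟩
        · intro h; exact h2 ⟨h, hk⟩
      rcases Nat.eq_zero_or_pos ((triG G).degree v) with h0 | h0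
      · exact h0
      · have := deg_ge_two_of_S G (mem_S_of_deg_pos G h0)
        omega
    have e1 : ∑ v, (triG G).degree v = ∑ v ∈ A ∪ B ∪ C, (triG G).degree v :=
      (Finset.sum_subset (Finset.subset_univ _) hz).symm
    rw [e1, Finset.sum_union hdisjABC, Finset.sum_union hdisjAB]
    have eA : ∑ v ∈ A, (triG G).degree v = 3 * A.card := by
      rw [Finset.sum_congr rfl (fun v hv => ((Finset.mem_filter.mp hv).2.1 : _)),
        Finset.sum_const, smul_eq_mul, mul_comm]
    have eB : ∑ v ∈ B, (triG G).degree v = 3 * B.card := by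
      rw [Finset.sum_congr rfl (fun v hv => ((Finset.mem_filter.mp hv).2.1 : _)),
        Finset.sum_const, smul_eq_mul, mul_comm]
    have eC : ∑ v ∈ C, (triG G).degree v = 2 * C.card := by
      rw [Finset.sum_congr rfl (fun v hv => ((Finset.mem_filter.mp hv).2 : _)),
        Finset.sum_const, smul_eq_mul, mul_comm]
    rw [eA, eB, eC]
  have hsubS : A ∪ B ∪ C ⊆ Sf := by
    intro v hv
    rw [hSf, Finset.mem_filter]
    refine ⟨Finset.mem_univ v, ?_⟩
    apply mem_S_of_deg_pos G
    simp only [Finset.mem_union, hA, hB, hC, Finset.mem_filter, Finset.mem_univ,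
      true_and] at hv
    rcases hv with (⟨h, -⟩ | ⟨h, -⟩) | h <;> omega
  have hABC : A.card + B.card + C.card ≤ Sf.card := by
    have := Finset.card_le_card hsubS
    rwa [Finset.card_union_of_disjoint hdisjABC, Finset.card_union_of_disjoint hdisjAB] at this
  have hAK : A.card ≤ Kf.card := by
    apply Finset.card_le_card
    intro v hv
    rw [hA, Finset.mem_filter] at hv
    rw [hKf, Finset.mem_filter]
    exact ⟨hv.1, hv.2.2⟩
  have hBC : 2 * B.card ≤ 2 * C.card := by
    have h1 : ∀ v ∈ B, 2 ≤ (C.filter (fun c => (triG G).Adj v c)).card := by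
      intro v hv
      rw [hB, Finset.mem_filter] at hv
      obtain ⟨x, y, hxy, hax, hay, hdx, hdy⟩ := key G hreg v hv.2.1 hv.2.2
      have hsub : ({x, y} : Finset (Fin n)) ⊆ C.filter (fun c => (triG G).Adj v c) := by
        intro w hw
        simp only [Finset.mem_insert, Finset.mem_singleton] at hw
        rw [Finset.mem_filter, hC, Finset.mem_filter]
        rcases hw with rfl | rfl
        · exact ⟨⟨Finset.mem_univ w, hdx⟩, hax⟩
        · exact ⟨⟨Finset.mem_univ w, hdy⟩, hay⟩
      calc 2 = ({x, y} : Finset (Fin n)).card := (Finset.card_pair hxy).symm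
        _ ≤ _ := Finset.card_le_card hsub
    have h2 : ∀ c ∈ C, (B.filter (fun v => (triG G).Adj v c)).card ≤ 2 := by
      intro c hc
      rw [hC, Finset.mem_filter] at hc
      have hsub : B.filter (fun v => (triG G).Adj v c) ⊆ (triG G).neighborFinset c := by
        intro v hv
        rw [SimpleGraph.mem_neighborFinset]
        exact ((Finset.mem_filter.mp hv).2).symm
      calc (B.filter (fun v => (triG G).Adj v c)).card
          ≤ ((triG G).neighborFinset c).card := Finset.card_le_card hsub
        _ = 2 := hc.2
    calc 2 * B.card = ∑ _v ∈ B, 2 := by rw [Finset.sum_const, smul_eq_mul, mul_comm]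
      _ ≤ ∑ v ∈ B, (C.filter (fun c => (triG G).Adj v c)).card := Finset.sum_le_sum h1
      _ = ∑ v ∈ B, ∑ c ∈ C, if (triG G).Adj v c then 1 else 0 := by
          refine Finset.sum_congr rfl fun v _ => ?_
          rw [Finset.card_filter]
      _ = ∑ c ∈ C, ∑ v ∈ B, if (triG G).Adj v c then 1 else 0 := Finset.sum_comm
      _ ≤ ∑ c ∈ C, 2 := by
          refine Finset.sum_le_sum fun c hc => ?_
          rw [← Finset.card_filter]
          exact h2 c hc
      _ = 2 * C.card := by rw [Finset.sum_const, smul_eq_mul, mul_comm]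
  have hE : 2 * (triG G).edgeFinset.card = 3 * A.card + 3 * B.card + 2 * C.card := by
    rw [← hsum, hdecomp]
  omega
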